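/- Suppose a/(c·b^x) > 1 is a fraction in lowest terms (a, b, c, x positive integers, gcd(a, c·b^x) = 1), that a/(c·b^x) = I(x, n) for some positive integer n, and that c·b^x has a divisor of the form d^x where d = ∏_{i=1}^{s} p_i^{k_i}, satisfying I(x, p_i·d) > a/(c·b^x) for all 1 ≤ i ≤ s. Then (d^x/σ_x(d))·(a/(c·b^x)) = I(x, m) for some positive integer m, i.e., it is also an x-th abundancy index. -/
import Mathlib


open Finset Nat

/-- Sum of x-th powers of divisors. -/
def sigmaX (x n : ℕ) : ℕ := ∑ d ∈ n.divisors, d ^ x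

/-- The x-th abundancy index as a rational number. -/
def Iq (x n : ℕ) : ℚ := (sigmaX x n : ℚ) / (n : ℚ) ^ x

lemma sigmaX_eq_sigma (x n : ℕ) : sigmaX x n = ArithmeticFunction.sigma x n := by
  simp [sigmaX, ArithmeticFunction.sigma_apply]

lemma sigmaX_pos {x n : ℕ} (hn : 0 < n) : 0 < sigmaX x n := by
  apply Finset.sum_pos
  · intro i hi
    exact pow_pos (Nat.pos_of_mem_divisors hi) x
  · exact ⟨n, Nat.mem_divisors_self n hn.ne'⟩

lemma Iq_eq_sum {x n : ℕ} (hn : 0 < n) :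
    Iq x n = ∑ e ∈ n.divisors, ((e : ℚ)⁻¹) ^ x := by
  have hn0 : (n : ℚ) ≠ 0 := Nat.cast_ne_zero.mpr hn.ne'
  have h1 : (sigmaX x n : ℚ) = ∑ e ∈ n.divisors, ((n / e : ℕ) : ℚ) ^ x := by
    rw [Nat.sum_div_divisors n (fun e => ((e : ℕ) : ℚ) ^ x)]
    simp [sigmaX]
  rw [Iq, h1, Finset.sum_div]
  apply Finset.sum_congr rfl
  intro e he
  have hed : e ∣ n := (Nat.mem_divisors.mp he).1
  have he0 : (e : ℚ) ≠ 0 := Nat.cast_ne_zero.mpr (Nat.pos_of_mem_divisors he).ne'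
  rw [Nat.cast_div hed he0, div_pow, div_div, mul_comm, ← div_div,
    div_self (pow_ne_zero x hn0), one_div, inv_pow]

lemma Iq_mono {x m n : ℕ} (hm : 0 < m) (hn : 0 < n) (hmn : m ∣ n) :
    Iq x m ≤ Iq x n := by
  rw [Iq_eq_sum hm, Iq_eq_sum hn]
  apply Finset.sum_le_sum_of_subset_of_nonneg
  · exact Nat.divisors_subset_of_dvd hn.ne' hmn
  · intro i _ _
    positivity

theorem stmt_15 (x a b c s : ℕ) (hx : 0 < x) (ha : 0 < a) (hb : 0 < b) (hc : 0 < c)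
    (hs : 0 < s)
    (hgt : (1 : ℚ) < (a : ℚ) / ((c : ℚ) * (b : ℚ) ^ x))
    (hcop : Nat.gcd a (c * b ^ x) = 1)
    (n : ℕ) (hn : 0 < n) (hIn : Iq x n = (a : ℚ) / ((c : ℚ) * (b : ℚ) ^ x))
    (p : Fin s → ℕ) (k : Fin s → ℕ)
    (hp : ∀ i, (p i).Prime) (hinj : Function.Injective p) (hk : ∀ i, 0 < k i)
    (d : ℕ) (hd : d = ∏ i, p i ^ k i)
    (hddvd : d ^ x ∣ c * b ^ x)
    (hgtI : ∀ i, Iq x (p i * d) > (a : ℚ) / ((c : ℚ) * (b : ℚ) ^ x)) :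
    ∃ m : ℕ, 0 < m ∧
      Iq x m = ((d : ℚ) ^ x / (sigmaX x d : ℚ)) * ((a : ℚ) / ((c : ℚ) * (b : ℚ) ^ x)) := by
  have hn0 : (n : ℚ) ≠ 0 := Nat.cast_ne_zero.mpr hn.ne'
  have hc0 : (c : ℚ) ≠ 0 := Nat.cast_ne_zero.mpr hc.ne'
  have hb0 : (b : ℚ) ≠ 0 := Nat.cast_ne_zero.mpr hb.ne'
  -- cross multiplication in ℕ
  have hcross : sigmaX x n * (c * b ^ x) = a * n ^ x := by
    have h := hIn
    rw [Iq, div_eq_div_iff (by positivity) (by positivity)] at h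
    exact_mod_cast h
  have hdvd1 : c * b ^ x ∣ n ^ x := by
    have h1 : c * b ^ x ∣ n ^ x * a := ⟨sigmaX x n, by linarith [hcross]⟩
    exact (Nat.Coprime.dvd_of_dvd_mul_right (Nat.coprime_comm.mp hcop) h1)
  have hdn : d ∣ n := (Nat.pow_dvd_pow_iff hx.ne').mp (hddvd.trans hdvd1)
  have hdpos : 0 < d := by
    rw [hd]; exact Finset.prod_pos fun i _ => pow_pos (hp i).pos (k i)
  set m := n / d with hmdef
  have hnm : n = d * m := (Nat.mul_div_cancel' hdn).symm
  have hmpos : 0 < m := Nat.div_pos (Nat.le_of_dvd hn hdn) hdpos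
  -- coprimality of d and m
  have hcopdm : Nat.Coprime d m := by
    by_contra hnc
    obtain ⟨q, hq, hqd, hqm⟩ := Nat.Prime.not_coprime_iff_dvd.mp hnc
    have hqp : ∃ i, q = p i := by
      rw [hd] at hqd
      obtain ⟨i, _, hqi⟩ := (Prime.dvd_finset_prod_iff hq.prime _).mp hqd
      exact ⟨i, ((Nat.prime_dvd_prime_iff_eq hq (hp i)).mp
        (hq.dvd_of_dvd_pow hqi))⟩
    obtain ⟨i, rfl⟩ := hqp
    have hdvdn : p i * d ∣ n := by
      rw [hnm, mul_comm (p i) d]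
      exact mul_dvd_mul dvd_rfl hqm
    have hle : Iq x (p i * d) ≤ Iq x n :=
      Iq_mono (Nat.mul_pos (hp i).pos hdpos) hn hdvdn
    have := hgtI i
    rw [← hIn] at this
    linarith
  refine ⟨m, hmpos, ?_⟩
  have hsig : sigmaX x n = sigmaX x d * sigmaX x m := by
    rw [sigmaX_eq_sigma, sigmaX_eq_sigma, sigmaX_eq_sigma, hnm]
    exact ArithmeticFunction.isMultiplicative_sigma.map_mul_of_coprime hcopdm
  have hd0 : (d : ℚ) ≠ 0 := Nat.cast_ne_zero.mpr hdpos.ne'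
  have hm0 : (m : ℚ) ≠ 0 := Nat.cast_ne_zero.mpr hmpos.ne'
  have hsd0 : (sigmaX x d : ℚ) ≠ 0 := Nat.cast_ne_zero.mpr (sigmaX_pos hdpos).ne'
  rw [← hIn, Iq, Iq, hsig, hnm]
  push_cast
  field_simp
  ring
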